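/- Combining the two previous facts: for distinct strings s¹,…,sⁿ with no sᵢ a substring of sⱼ (i ≠ j), the minimal length of a common superstring equals Σᵢ |sᵢ| minus the maximum over permutations π of Σ_{j=2}^{n} overlap(s^{π(j-1)}, s^{π(j)}). Equivalently, the shortest superstring length equals the total length minus the maximum-weight Hamiltonian path weight in the overlap graph. -/

import Mathlib

/-- `overlap s t` is the length of the longest suffix of `s` that is a prefix of `t`. -/
def overlap {α : Type*} [DecidableEq α] (s t : List α) : ℕ :=
  Nat.findGreatest (fun z => s.drop (s.length - z) = t.take z) (min s.length t.length)

/-- Merge a list of strings by successively appending, for each next string,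
only its part that does not overlap (maximally) with the previous string. -/
def mergeList {α : Type*} [DecidableEq α] : List (List α) → List α
  | [] => []
  | [x] => x
  | x :: y :: rest => x ++ (mergeList (y :: rest)).drop (overlap x y)

/-- Sum of the overlaps of consecutive strings in a list. -/
def overlapSum {α : Type*} [DecidableEq α] (l : List (List α)) : ℕ :=
  ((l.zip l.tail).map (fun p => overlap p.1 p.2)).sum
namespace StmtAux
variable {α : Type*} [DecidableEq α]

lemma overlap_le_left (x y : List α) : overlap x y ≤ x.length :=
  (Nat.findGreatest_le _).trans (min_le_left _ _)

lemma overlap_le_right (x y : List α) : overlap x y ≤ y.length :=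
  (Nat.findGreatest_le _).trans (min_le_right _ _)

lemma overlap_spec (x y : List α) :
    x.drop (x.length - overlap x y) = y.take (overlap x y) :=
  Nat.findGreatest_spec (P := fun z => x.drop (x.length - z) = y.take z)
    (Nat.zero_le _) (by simp)

lemma le_overlap {x y : List α} {z : ℕ} (hx : z ≤ x.length) (hy : z ≤ y.length)
    (h : x.drop (x.length - z) = y.take z) : z ≤ overlap x y :=
  Nat.le_findGreatest (le_min hx hy) h

lemma overlapSum_nil : overlapSum ([] : List (List α)) = 0 := rfl
lemma overlapSum_single (x : List α) : overlapSum [x] = 0 := rfl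
lemma overlapSum_cons_cons (x y : List α) (r : List (List α)) :
    overlapSum (x :: y :: r) = overlap x y + overlapSum (y :: r) := by
  simp [overlapSum]

lemma prefix_mergeList (x : List α) (rest : List (List α)) :
    x <+: mergeList (x :: rest) := by
  cases rest with
  | nil => simp [mergeList]
  | cons y r => exact ⟨_, rfl⟩

lemma mergeList_cons_cons (x y : List α) (r : List (List α)) :
    mergeList (x :: y :: r) = x.take (x.length - overlap x y) ++ mergeList (y :: r) := by
  obtain ⟨u, hu⟩ := prefix_mergeList y r
  have h1 : x.drop (x.length - overlap x y) = (mergeList (y :: r)).take (overlap x y) := by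
    rw [overlap_spec x y, ← hu, List.take_append_of_le_length (overlap_le_right x y)]
  show x ++ (mergeList (y :: r)).drop (overlap x y) = _
  calc x ++ (mergeList (y :: r)).drop (overlap x y)
      = x.take (x.length - overlap x y) ++ (x.drop (x.length - overlap x y) ++
        (mergeList (y :: r)).drop (overlap x y)) := by
        rw [← List.append_assoc, List.take_append_drop]
    _ = _ := by rw [h1, List.take_append_drop]

lemma suffix_mergeList (x y : List α) (r : List (List α)) :
    mergeList (y :: r) <:+ mergeList (x :: y :: r) := by
  rw [mergeList_cons_cons]; exact ⟨_, rfl⟩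

lemma infix_mergeList : ∀ (l : List (List α)), ∀ x ∈ l, x <:+: mergeList l := by
  intro l
  induction l with
  | nil => simp
  | cons a l ih =>
    intro x hx
    rcases List.mem_cons.1 hx with rfl | hx
    · exact (prefix_mergeList _ l).isInfix
    · cases l with
      | nil => simp at hx
      | cons b r =>
        exact (ih x hx).trans (suffix_mergeList a b r).isInfix

lemma length_mergeList : ∀ (l : List (List α)),
    (mergeList l).length + overlapSum l = (l.map List.length).sum := by
  intro l
  induction l with
  | nil => rfl
  | cons a l ih =>
    cases l with
    | nil => simp [mergeList, overlapSum]
    | cons b r =>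
      have hle : overlap a b ≤ (mergeList (b :: r)).length :=
        (overlap_le_right a b).trans (prefix_mergeList b r).length_le
      rw [overlapSum_cons_cons]
      show (a ++ (mergeList (b :: r)).drop (overlap a b)).length + _ = _
      rw [List.length_append, List.length_drop]
      simp only [List.map_cons, List.sum_cons] at ih ⊢
      omega


def Occ (t : List α) (p : ℕ) (x : List α) : Prop :=
  (t.drop p).take x.length = x ∧ p + x.length ≤ t.length

lemma occ_of_infix {t x : List α} (h : x <:+: t) : ∃ p, Occ t p x := by
  obtain ⟨u, v, rfl⟩ := h
  refine ⟨u.length, ?_, ?_⟩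
  · rw [List.append_assoc, List.drop_left, List.take_left]
  · simp

lemma infix_of_occ {t x y : List α} {p q : ℕ} (hx : Occ t p x) (hy : Occ t q y)
    (hpq : p ≤ q) (hend : q + y.length ≤ p + x.length) : y <:+: x := by
  have h1 : x.drop (q - p) = (t.drop q).take (x.length - (q - p)) := by
    conv_lhs => rw [← hx.1]
    rw [List.drop_take, List.drop_drop]
    have e1 : p + (q - p) = q := by omega
    rw [e1]
  have h2 : ((t.drop q).take (x.length - (q - p))).take y.length = y := by
    rw [List.take_take, min_eq_left (by omega), hy.1]
  have key : (x.drop (q - p)).take y.length = y := by rw [h1, h2]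
  rw [← key]
  exact (List.take_prefix _ _).isInfix.trans (List.drop_suffix _ _).isInfix

lemma occ_overlap {t x y : List α} {p q : ℕ} (hx : Occ t p x) (hy : Occ t q y)
    (hpq : p < q) (hend : p + x.length ≤ q + y.length) :
    p + x.length ≤ q + overlap x y := by
  rcases le_or_gt (p + x.length) q with h | h
  · exact h.trans (Nat.le_add_right _ _)
  · set z := p + x.length - q with hz
    have hzx : z ≤ x.length := by omega
    have hzy : z ≤ y.length := by omega
    have e1 : p + (x.length - z) = q := by omega
    have e2 : x.length - (x.length - z) = z := by omega
    have h1 : x.drop (x.length - z) = (t.drop q).take z := by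
      calc x.drop (x.length - z)
          = ((t.drop p).take x.length).drop (x.length - z) := by rw [hx.1]
        _ = (t.drop q).take z := by rw [List.drop_take, List.drop_drop, e1, e2]
    have h2 : y.take z = (t.drop q).take z := by
      conv_lhs => rw [← hy.1]
      rw [List.take_take, min_eq_left hzy]
    have := le_overlap hzx hzy (h1.trans h2.symm)
    omega


lemma lowerAux (t : List α) :
    ∀ (L : List (List α × ℕ)) (a : List α × ℕ),
      (∀ pr ∈ a :: L, Occ t pr.2 pr.1) →
      (a :: L).Chain' (fun u v => u.2 < v.2 ∧ u.2 + u.1.length ≤ v.2 + v.1.length) →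
      (((a :: L).map Prod.fst).map List.length).sum + a.2 ≤
        overlapSum ((a :: L).map Prod.fst) + t.length := by
  intro L
  induction L with
  | nil =>
    intro a hocc _
    have h := (hocc a (by simp)).2
    simp only [List.map_cons, List.map_nil, List.sum_cons, List.sum_nil, overlapSum_single]
    omega
  | cons b L ih =>
    intro a hocc hchain
    obtain ⟨hab, hch⟩ := List.isChain_cons_cons.1 hchain
    have hib := ih b (fun pr h => hocc pr (List.mem_cons_of_mem _ h)) hch
    have hkey : a.2 + a.1.length ≤ b.2 + overlap a.1 b.1 :=
      occ_overlap (hocc a (by simp)) (hocc b (by simp)) hab.1 hab.2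
    simp only [List.map_cons, List.sum_cons, overlapSum_cons_cons] at hib ⊢
    omega

lemma lowerAux' (t : List α) (L : List (List α × ℕ))
    (hocc : ∀ pr ∈ L, Occ t pr.2 pr.1)
    (hchain : L.Chain' (fun u v => u.2 < v.2 ∧ u.2 + u.1.length ≤ v.2 + v.1.length)) :
    ((L.map Prod.fst).map List.length).sum ≤ overlapSum (L.map Prod.fst) + t.length := by
  cases L with
  | nil => simp [overlapSum_nil]
  | cons a L =>
    have := lowerAux t L a hocc hchain
    omega

lemma le_foldr_max {L : List ℕ} {a : ℕ} (h : a ∈ L) : a ≤ L.foldr max 0 := by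
  induction L with
  | nil => simp at h
  | cons b L ih =>
    rcases List.mem_cons.1 h with rfl | h
    · exact le_max_left _ _
    · exact (ih h).trans (le_max_right _ _)

lemma foldr_max_mem : ∀ (b : ℕ) (L : List ℕ), (b :: L).foldr max 0 ∈ b :: L := by
  intro b L
  induction L generalizing b with
  | nil => simp
  | cons c L ih =>
    show max b ((c :: L).foldr max 0) ∈ _
    rcases max_choice b ((c :: L).foldr max 0) with h | h <;> rw [h]
    · exact List.mem_cons_self
    · exact List.mem_cons_of_mem _ (ih c)

lemma lower_bound {n : ℕ} (s : Fin n → List α)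
    (hnosub : ∀ i j, i ≠ j → ¬ (s i).IsInfix (s j)) (t : List α)
    (ht : ∀ i, (s i).IsInfix t) :
    ∃ l ∈ (List.ofFn s).permutations,
      (∑ i, (s i).length) ≤ overlapSum l + t.length := by
  choose p hp using fun i => occ_of_infix (ht i)
  have hpinj : Function.Injective p := by
    intro i j hij
    by_contra hne
    rcases le_total (s i).length (s j).length with hl | hl
    · exact hnosub i j hne (infix_of_occ (hp j) (hp i) hij.ge (by omega))
    · exact hnosub j i (Ne.symm hne) (infix_of_occ (hp i) (hp j) hij.le (by omega))
  set σ := Tuple.sort p with hσ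
  have hmono : StrictMono (p ∘ σ) :=
    (Tuple.monotone_sort p).strictMono_of_injective (hpinj.comp σ.injective)
  set L : List (List α × ℕ) := List.ofFn (fun k => (s (σ k), p (σ k))) with hL
  have hocc : ∀ pr ∈ L, Occ t pr.2 pr.1 := by
    intro pr hpr
    obtain ⟨k, hk⟩ := List.mem_ofFn.1 hpr
    rw [← hk]
    exact hp _
  have hchain : L.Chain' (fun u v => u.2 < v.2 ∧ u.2 + u.1.length ≤ v.2 + v.1.length) := by
    rw [hL]; refine List.isChain_ofFn.2 ?_
    intro i hi
    have hlt : p (σ ⟨i, Nat.lt_of_succ_lt hi⟩) < p (σ ⟨i + 1, hi⟩) :=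
      hmono (by simp [Fin.mk_lt_mk])
    refine ⟨hlt, ?_⟩
    by_contra hgt
    push_neg at hgt
    have hne : σ ⟨i + 1, hi⟩ ≠ σ ⟨i, Nat.lt_of_succ_lt hi⟩ := by
      intro h; rw [h] at hlt; exact lt_irrefl _ hlt
    exact hnosub _ _ hne (infix_of_occ (hp _) (hp _) hlt.le hgt.le)
  refine ⟨List.ofFn (fun k => s (σ k)), List.mem_permutations.2 (σ.ofFn_comp_perm s), ?_⟩
  have hmap : L.map Prod.fst = List.ofFn (fun k => s (σ k)) := by
    rw [hL, List.map_ofFn]; rfl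
  have h1 := lowerAux' t L hocc hchain
  rw [hmap] at h1
  have h2 : ((List.ofFn fun k => s (σ k)).map List.length).sum = ∑ i, (s i).length := by
    rw [List.map_ofFn, List.sum_ofFn]
    exact Equiv.sum_comp σ fun i => (s i).length
  rw [h2] at h1
  exact h1

end StmtAux

theorem stmt_6 {α : Type*} [DecidableEq α] (n : ℕ) (s : Fin n → List α)
    (hinj : Function.Injective s)
    (hnosub : ∀ i j, i ≠ j → ¬ (s i).IsInfix (s j)) :
    sInf {m : ℕ | ∃ t : List α, (∀ i, (s i).IsInfix t) ∧ t.length = m} =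
      (∑ i, (s i).length) -
        ((List.ofFn s).permutations.map overlapSum).foldr max 0 := by
  classical
  set M := ((List.ofFn s).permutations.map overlapSum).foldr max 0 with hM
  have hself : List.ofFn s ∈ (List.ofFn s).permutations :=
    List.mem_permutations.2 (List.Perm.refl _)
  have hmem : M ∈ (List.ofFn s).permutations.map overlapSum := by
    rw [hM]
    cases h : (List.ofFn s).permutations.map overlapSum with
    | nil =>
      exfalso
      have hh := List.mem_map_of_mem (f := overlapSum) hself
      rw [h] at hh
      simp at hh
    | cons b L => exact StmtAux.foldr_max_mem b L
  obtain ⟨l₀, hl₀, hMl₀⟩ := List.mem_map.1 hmem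
  have hl₀p := List.mem_permutations.1 hl₀
  have hsum : (l₀.map List.length).sum = ∑ i, (s i).length := by
    rw [(hl₀p.map List.length).sum_eq, List.map_ofFn, List.sum_ofFn]
    rfl
  have hsup : ∀ i, (s i).IsInfix (mergeList l₀) := by
    intro i
    exact StmtAux.infix_mergeList l₀ (s i)
      (hl₀p.mem_iff.2 (List.mem_ofFn.2 ⟨i, rfl⟩))
  have hlen : (mergeList l₀).length + M = ∑ i, (s i).length := by
    rw [← hMl₀, StmtAux.length_mergeList, hsum]
  have hmemset : (∑ i, (s i).length) - M ∈
      {m : ℕ | ∃ t : List α, (∀ i, (s i).IsInfix t) ∧ t.length = m} :=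
    ⟨mergeList l₀, hsup, by omega⟩
  apply le_antisymm
  · exact Nat.sInf_le hmemset
  · apply le_csInf ⟨_, hmemset⟩
    rintro m ⟨t, ht, rfl⟩
    obtain ⟨l, hl, hineq⟩ := StmtAux.lower_bound s hnosub t ht
    have hle : overlapSum l ≤ M := StmtAux.le_foldr_max (List.mem_map_of_mem hl)
    omega
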